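/- Let f be a continuous function on the closed unit ball B^n in ℝ^n, and suppose that for some natural number G, every set of the form {x ∈ B^n : f(x) ≥ 1/m} (m ∈ ℕ, m ≥ 1) has at most G connected components. Then the open set {x ∈ B^n : f(x) > 0} has at most G connected components. -/
import Mathlib


/-- If every superlevel set `{x ∈ B^n : f x ≥ 1/m}` has at most `G` connected
components, then `{x ∈ B^n : f x > 0}` has at most `G` connected components.
"At most `G` components" is encoded by: among any `G+1` points of the set, two
lie in the same connected component (connected component within the set). -/
theorem stmt_6 (n G : ℕ) (f : EuclideanSpace ℝ (Fin n) → ℝ)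
    (hf : ContinuousOn f (Metric.closedBall (0 : EuclideanSpace ℝ (Fin n)) 1))
    (h : ∀ m : ℕ, 1 ≤ m →
      ∀ g : Fin (G + 1) → EuclideanSpace ℝ (Fin n),
        (∀ i, g i ∈ Metric.closedBall (0 : EuclideanSpace ℝ (Fin n)) 1 ∧ (1 : ℝ) / m ≤ f (g i)) →
        ∃ i j, i ≠ j ∧
          connectedComponentIn
            {x ∈ Metric.closedBall (0 : EuclideanSpace ℝ (Fin n)) 1 | (1 : ℝ) / m ≤ f x} (g i) =
          connectedComponentIn
            {x ∈ Metric.closedBall (0 : EuclideanSpace ℝ (Fin n)) 1 | (1 : ℝ) / m ≤ f x} (g j)) :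
    ∀ g : Fin (G + 1) → EuclideanSpace ℝ (Fin n),
      (∀ i, g i ∈ Metric.closedBall (0 : EuclideanSpace ℝ (Fin n)) 1 ∧ 0 < f (g i)) →
      ∃ i j, i ≠ j ∧
        connectedComponentIn
          {x ∈ Metric.closedBall (0 : EuclideanSpace ℝ (Fin n)) 1 | 0 < f x} (g i) =
        connectedComponentIn
          {x ∈ Metric.closedBall (0 : EuclideanSpace ℝ (Fin n)) 1 | 0 < f x} (g j) := by
  intro g hg
  -- pick m with 1/m ≤ f (g i) for all i
  obtain ⟨i0, -, hi0⟩ := Finset.exists_min_image Finset.univ (fun i => f (g i)) ⟨0, Finset.mem_univ 0⟩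
  have hcpos : 0 < f (g i0) := (hg i0).2
  obtain ⟨m, hm⟩ := exists_nat_one_div_lt hcpos
  have hm1 : 1 ≤ m + 1 := Nat.le_add_left 1 m
  have key : ∀ i, g i ∈ Metric.closedBall (0 : EuclideanSpace ℝ (Fin n)) 1 ∧
      (1 : ℝ) / (m + 1 : ℕ) ≤ f (g i) := by
    intro i
    refine ⟨(hg i).1, ?_⟩
    push_cast
    exact le_trans hm.le (hi0 i (Finset.mem_univ i))
  obtain ⟨i, j, hij, heq⟩ := h (m + 1) hm1 g key
  refine ⟨i, j, hij, ?_⟩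
  set S := {x ∈ Metric.closedBall (0 : EuclideanSpace ℝ (Fin n)) 1 | (1 : ℝ) / ((m : ℝ) + 1) ≤ f x}
  set U := {x ∈ Metric.closedBall (0 : EuclideanSpace ℝ (Fin n)) 1 | 0 < f x}
  have hSU : S ⊆ U := by
    intro x hx
    exact ⟨hx.1, lt_of_lt_of_le (by positivity) hx.2⟩
  have hiS : g i ∈ S := by
    have := key i
    simpa [S] using this
  have hjS : g j ∈ S := by
    have := key j
    simpa [S] using this
  have hmem : g j ∈ connectedComponentIn U (g i) := by
    have : g j ∈ connectedComponentIn S (g i) := by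
      have h2 : g j ∈ connectedComponentIn S (g j) := mem_connectedComponentIn hjS
      have heq' : connectedComponentIn S (g i) = connectedComponentIn S (g j) := by
        convert heq using 3 <;> push_cast <;> ring
      rw [heq']; exact h2
    exact connectedComponentIn_mono (g i) hSU this
  exact connectedComponentIn_eq hmem
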